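/- Let S ≥ 2, let α, β ∈ ℝ with β < α ≤ 1, let g(j) = ((1−α)+(1−β)j)/(j+1), and let A be the S×S real matrix with A_{i,j} = g(j) for i ≤ j and 0 for i > j. Let P* ∈ ℝ^S be any probability vector (nonnegative entries summing to 1) with P*_{S−1} > 0. Set p = (α−β)/((1−β)S) and s_n = Σ_{i=0}^{S−1} (A^n P*)_i. Then s_n ≠ 0 for all sufficiently large n, and A^n P*/s_n converges, as n → ∞, to the vector whose i-th entry is C(S−1, i) · p^i · (1−p)^{S−1−i}; that is, the iterated Katz partial summations converge to the binomial distribution Bin(S−1, (α−β)/((1−β)S)) regardless of the original parent distribution. -/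

import Mathlib

open Filter Finset

lemma aux_rec_zero (r : ℝ) (hr0 : 0 ≤ r) (hr1 : r < 1) (y e : ℕ → ℝ)
    (hrec : ∀ n, y (n + 1) = r * y n + e n)
    (he : Tendsto e atTop (nhds 0)) : Tendsto y atTop (nhds 0) := by
  rw [NormedAddCommGroup.tendsto_nhds_zero]
  intro ε hε
  have hε4 : 0 < ε * (1 - r) / 4 := by nlinarith
  obtain ⟨N, hN⟩ := (Metric.tendsto_atTop.mp he) (ε * (1 - r) / 4) hε4
  have key : ∀ k, |y (N + k)| ≤ r ^ k * |y N| + ε / 2 := by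
    intro k
    induction k with
    | zero => simp; nlinarith
    | succ k ih =>
      have hrw : y (N + (k + 1)) = r * y (N + k) + e (N + k) := by
        rw [← hrec (N + k)]; ring_nf
      have he' : |e (N + k)| ≤ ε * (1 - r) / 4 := by
        have := hN (N + k) (by omega)
        rw [Real.dist_eq, sub_zero] at this
        linarith [this.le]
      calc |y (N + (k + 1))| ≤ r * |y (N + k)| + |e (N + k)| := by
            rw [hrw]
            refine (abs_add_le _ _).trans ?_
            rw [abs_mul, abs_of_nonneg hr0]
          _ ≤ r * (r ^ k * |y N| + ε / 2) + ε * (1 - r) / 4 := by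
            have := mul_le_mul_of_nonneg_left ih hr0
            linarith
          _ ≤ r ^ (k + 1) * |y N| + ε / 2 := by
            rw [pow_succ]
            nlinarith [mul_nonneg (by linarith : (0:ℝ) ≤ 1 - r) hε.le]
  have hpow : Tendsto (fun k => r ^ k * |y N|) atTop (nhds 0) := by
    have := tendsto_pow_atTop_nhds_zero_of_abs_lt_one (r := r) (by rw [abs_of_nonneg hr0]; exact hr1)
    simpa using this.mul_const |y N|
  obtain ⟨K, hK⟩ := (Metric.tendsto_atTop.mp hpow) (ε / 4) (by positivity)
  rw [eventually_atTop]
  refine ⟨N + K, fun n hn => ?_⟩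
  have h1 := key (n - N)
  have h2 := hK (n - N) (by omega)
  rw [Real.dist_eq, sub_zero] at h2
  have h2' := lt_of_abs_lt h2
  have : N + (n - N) = n := by omega
  rw [this] at h1
  simp only [Real.norm_eq_abs]
  linarith

lemma aux_rec_tendsto (r : ℝ) (hr0 : 0 ≤ r) (hr1 : r < 1) (x d : ℕ → ℝ) (L : ℝ)
    (hrec : ∀ n, x (n + 1) = r * x n + d n)
    (hd : Tendsto d atTop (nhds ((1 - r) * L))) :
    Tendsto x atTop (nhds L) := by
  have h0 : Tendsto (fun n => x n - L) atTop (nhds 0) := by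
    apply aux_rec_zero r hr0 hr1 _ (fun n => d n - (1 - r) * L)
    · intro n; rw [hrec n]; ring
    · simpa using hd.sub_const ((1 - r) * L)
  have := h0.add_const L
  simpa using this

theorem stmt_7 (S : ℕ) (hS : 2 ≤ S) (α β : ℝ) (hβα : β < α) (hα : α ≤ 1)
    (g : ℕ → ℝ) (hg : ∀ j : ℕ, g j = ((1 - α) + (1 - β) * j) / (j + 1))
    (A : Matrix (Fin S) (Fin S) ℝ)
    (hA : ∀ i j : Fin S, A i j = if (i : ℕ) ≤ (j : ℕ) then g j else 0)
    (P : Fin S → ℝ) (hPnn : ∀ i, 0 ≤ P i) (hPsum : ∑ i, P i = 1)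
    (hPlast : 0 < P ⟨S - 1, by omega⟩)
    (p : ℝ) (hp : p = (α - β) / ((1 - β) * S))
    (s : ℕ → ℝ) (hs : ∀ n, s n = ∑ i, (A ^ n).mulVec P i) :
    (∀ᶠ n in atTop, s n ≠ 0) ∧
      Tendsto (fun n : ℕ => (s n)⁻¹ • (A ^ n).mulVec P) atTop
        (nhds (fun i : Fin S =>
          ((S - 1).choose i : ℝ) * p ^ (i : ℕ) * (1 - p) ^ (S - 1 - (i : ℕ)))) := by
  set m := S - 1 with hm
  have hmS : S = m + 1 := by omega
  have hm1 : 1 ≤ m := by omega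
  -- basic real facts
  have hγ : (0:ℝ) < 1 - β := by linarith
  have hαβ : (0:ℝ) < α - β := by linarith
  have hS0 : (0:ℝ) < (S : ℝ) := by positivity
  have hS2 : (2:ℝ) ≤ (S : ℝ) := by exact_mod_cast hS
  have hSr : ((S : ℝ)) = (m : ℝ) + 1 := by rw [hmS]; push_cast; ring
  have hppos : 0 < p := by rw [hp]; positivity
  have hplt : p < 1 := by
    rw [hp, div_lt_one (by positivity)]
    nlinarith
  have hq : 0 < 1 - p := by linarith
  have hbp : (1 - β) * p = (α - β) / (S : ℝ) := by
    rw [hp]; field_simp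
  set lam : ℝ := (1 - β) * (1 - p) with hlamdef
  have hlampos : 0 < lam := by positivity
  have hlamne : lam ≠ 0 := ne_of_gt hlampos
  have hgform : ∀ j : ℕ, g j = (1 - β) - (α - β) / (j + 1) := by
    intro j
    rw [hg]
    have : ((j:ℝ) + 1) ≠ 0 := by positivity
    field_simp
    ring
  have hlamform : lam = (1 - β) - (α - β) / (S : ℝ) := by
    rw [hlamdef]
    linear_combination (-1 : ℝ) * hbp
  have hgm : g m = lam := by
    rw [hgform m, hlamform, hSr]
  have hgnn : ∀ j : ℕ, 0 ≤ g j := by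
    intro j
    rw [hg]
    apply div_nonneg _ (by positivity)
    have h1 : (0:ℝ) ≤ 1 - α := by linarith
    have h2 : (0:ℝ) ≤ (1 - β) * (j : ℝ) := by positivity
    linarith
  have hglt : ∀ j : ℕ, j < m → g j < lam := by
    intro j hj
    rw [hgform j, hlamform]
    have hlt : ((j:ℝ) + 1) < (S : ℝ) := by
      rw [hSr]; exact_mod_cast by omega
    have := div_lt_div_of_pos_left hαβ (by positivity : (0:ℝ) < (j:ℝ) + 1) hlt
    linarith
  -- the binomial eigenvector
  set V : ℕ → ℝ := fun t => (m.choose t : ℝ) * p ^ t * (1 - p) ^ (m - t) with hVdef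
  have hVm : V m = p ^ m := by simp [hVdef]
  have hVmne : V m ≠ 0 := by rw [hVm]; positivity
  have hkey : ∀ j : ℕ, j ≤ m → g j * V j = lam * V j - lam * V (j + 1) := by
    intro j hj
    rcases eq_or_lt_of_le hj with heq | hlt
    · have hV0 : V (m + 1) = 0 := by simp [hVdef, Nat.choose_succ_self]
      rw [heq, hV0, hgm]; ring
    · have hc := congrArg (Nat.cast : ℕ → ℝ) (Nat.choose_succ_right_eq m j)
      rw [Nat.cast_mul, Nat.cast_mul, Nat.cast_sub hj] at hc
      push_cast at hc
      have hbp' : (1 - β) * p * (S : ℝ) = α - β := by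
        rw [hp]; field_simp
      have hj1 : ((j:ℝ) + 1) ≠ 0 := by positivity
      have hlamg : lam - g j = (α - β) * ((m : ℝ) - j) / ((S : ℝ) * ((j:ℝ) + 1)) := by
        rw [hgform j, hlamform, hSr]
        field_simp
        ring
      have hmj : m - (j + 1) + 1 = m - j := by omega
      have hVj : V j = ((m.choose j : ℝ) * (1 - p)) * (p ^ j * (1 - p) ^ (m - (j + 1))) := by
        simp only [hVdef]
        rw [← hmj, pow_succ]
        ring
      have hVj1 : V (j + 1) = ((m.choose (j+1) : ℝ) * p) * (p ^ j * (1 - p) ^ (m - (j + 1))) := by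
        simp only [hVdef]
        rw [pow_succ]
        ring
      have e1 : (lam - g j) * ((m.choose j : ℝ)) * (1 - p) = lam * ((m.choose (j+1) : ℝ)) * p := by
        rw [hlamg, hlamdef, div_mul_eq_mul_div, div_mul_eq_mul_div,
          div_eq_iff (by positivity : (S : ℝ) * ((j:ℝ) + 1) ≠ 0)]
        linear_combination (-((1 - p) * ((m.choose (j+1) : ℝ)) * ((j:ℝ) + 1))) * hbp' +
          (-((α - β) * (1 - p))) * hc
      rw [hVj, hVj1]
      linear_combination (-(p ^ j * (1 - p) ^ (m - (j+1)))) * e1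
  -- telescoping sum : eigenvalue identity
  have hsumN : ∀ t : ℕ, ∀ i : ℕ, i + t = m → ∑ j ∈ Finset.Icc i m, g j * V j = lam * V i := by
    intro t
    induction t with
    | zero =>
      intro i hi
      have him : i = m := by omega
      rw [him, Finset.Icc_self, Finset.sum_singleton]
      have h1 := hkey m le_rfl
      have hV0 : V (m + 1) = 0 := by simp [hVdef, Nat.choose_succ_self]
      rw [hV0] at h1
      linarith
    | succ t ih =>
      intro i hi
      have hins : Finset.Icc i m = insert i (Finset.Icc (i+1) m) := by
        ext a; simp [Finset.mem_Icc, Finset.mem_insert]; omega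
      rw [hins, Finset.sum_insert (by simp), ih (i+1) (by omega)]
      have := hkey i (by omega)
      linarith
  -- mulVec formula
  have hmul : ∀ (x : Fin S → ℝ) (i : Fin S),
      A.mulVec x i = ∑ j ∈ Finset.univ.filter (fun j : Fin S => (i:ℕ) ≤ (j:ℕ)), g j * x j := by
    intro x i
    rw [Matrix.mulVec, dotProduct, Finset.sum_filter]
    apply Finset.sum_congr rfl
    intro j _
    rw [hA, ite_mul, zero_mul]
  have hfilins : ∀ i : Fin S,
      Finset.univ.filter (fun j : Fin S => (i:ℕ) ≤ (j:ℕ))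
        = insert i (Finset.univ.filter (fun j : Fin S => (i:ℕ) < (j:ℕ))) := by
    intro i
    ext j
    simp [Fin.ext_iff]
    omega
  have hnotmem : ∀ i : Fin S, i ∉ Finset.univ.filter (fun j : Fin S => (i:ℕ) < (j:ℕ)) := by
    intro i; simp
  -- normalized iterates
  set u : ℕ → Fin S → ℝ := fun n i => (A ^ n).mulVec P i / lam ^ n with hu
  have hlpn : ∀ n : ℕ, (lam : ℝ) ^ n ≠ 0 := fun n => pow_ne_zero n hlamne
  have hAu : ∀ n (i : Fin S), (A ^ n).mulVec P i = u n i * lam ^ n := by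
    intro n i
    rw [hu]
    field_simp
  have hurec : ∀ n (i : Fin S), u (n+1) i
      = (g i * u n i + ∑ j ∈ Finset.univ.filter (fun j : Fin S => (i:ℕ) < (j:ℕ)), g j * u n j) / lam := by
    intro n i
    have h1 : (A ^ (n+1)).mulVec P i
        = ∑ j ∈ Finset.univ.filter (fun j : Fin S => (i:ℕ) ≤ (j:ℕ)), g j * ((A ^ n).mulVec P j) := by
      rw [pow_succ', ← Matrix.mulVec_mulVec]
      exact hmul _ i
    have h2 : u (n+1) i = (∑ j ∈ Finset.univ.filter (fun j : Fin S => (i:ℕ) ≤ (j:ℕ)),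
        g j * (u n j * lam ^ n)) / (lam ^ n * lam) := by
      rw [hu]
      simp only
      rw [h1, pow_succ]
      congr 1
      apply Finset.sum_congr rfl
      intro j _
      rw [div_mul_cancel₀ _ (hlpn n)]
    rw [h2, hfilins i, Finset.sum_insert (hnotmem i)]
    have h3 : ∑ j ∈ Finset.univ.filter (fun j : Fin S => (i:ℕ) < (j:ℕ)), g j * (u n j * lam ^ n)
        = (∑ j ∈ Finset.univ.filter (fun j : Fin S => (i:ℕ) < (j:ℕ)), g j * u n j) * lam ^ n := by
      rw [Finset.sum_mul]
      apply Finset.sum_congr rfl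
      intro j _
      ring
    rw [h3]
    field_simp
  -- Fin version of eigen identity
  have hfin : ∀ i : Fin S,
      ∑ j ∈ Finset.univ.filter (fun j : Fin S => (i:ℕ) < (j:ℕ)), g j * V j
        = lam * V i - g i * V i := by
    intro i
    have hi : (i:ℕ) ≤ m := by have := i.isLt; omega
    have hrange : ∑ j ∈ Finset.univ.filter (fun j : Fin S => (i:ℕ) < (j:ℕ)), g j * V j
        = ∑ t ∈ Finset.Ioc (i:ℕ) m, g t * V t := by
      rw [Finset.sum_filter]
      rw [Fin.sum_univ_eq_sum_range (fun t => if (i:ℕ) < t then g t * V t else 0) S]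
      rw [← Finset.sum_filter]
      apply Finset.sum_congr
      · ext t; simp [Finset.mem_Ioc]; omega
      · intros; rfl
    rw [hrange]
    have hins : Finset.Icc (i:ℕ) m = insert (i:ℕ) (Finset.Ioc (i:ℕ) m) := by
      ext a; simp [Finset.mem_Icc, Finset.mem_Ioc]; omega
    have h1 := hsumN (m - (i:ℕ)) (i:ℕ) (by omega)
    rw [hins, Finset.sum_insert (by simp)] at h1
    linarith
  -- constant limit direction
  have imaxlt : m < S := by omega
  have hconst : ∀ (i : Fin S), (i:ℕ) = m → ∀ n, u n i = P i := by
    intro i hi n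
    induction n with
    | zero => simp [hu, Matrix.one_mulVec]
    | succ n ihn =>
      rw [hurec n i]
      have hemp : Finset.univ.filter (fun j : Fin S => (i:ℕ) < (j:ℕ)) = ∅ := by
        ext j
        simp only [Finset.mem_filter, Finset.mem_univ, true_and, Finset.notMem_empty, iff_false]
        have := j.isLt; omega
      rw [hemp, Finset.sum_empty, ihn, hi, hgm]
      field_simp
      ring
  set c : ℝ := P ⟨m, imaxlt⟩ / V m with hcdef
  have hcpos : 0 < c := by
    apply div_pos _ (by rw [hVm]; positivity)
    exact hPlast
  have hcne : c ≠ 0 := ne_of_gt hcpos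
  -- main convergence
  have ht : ∀ (k : ℕ) (i : Fin S), m - (i:ℕ) ≤ k →
      Tendsto (fun n => u n i) atTop (nhds (c * V (i:ℕ))) := by
    intro k
    induction k with
    | zero =>
      intro i hik
      have hi : (i:ℕ) = m := by have := i.isLt; omega
      have : ∀ n, u n i = P i := hconst i hi
      simp only [this]
      have hcV : c * V (i:ℕ) = P i := by
        rw [hi, hcdef, div_mul_cancel₀ _ hVmne]
        congr 1
        exact Fin.ext hi.symm
      rw [hcV]
      exact tendsto_const_nhds
    | succ k ih =>
      intro i hik
      rcases le_or_gt (m - (i:ℕ)) k with h | h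
      · exact ih i h
      have hilt : (i:ℕ) < m := by omega
      apply aux_rec_tendsto (g i / lam) (div_nonneg (hgnn _) hlampos.le)
        ((div_lt_one hlampos).mpr (hglt _ hilt)) _
        (fun n => (∑ j ∈ Finset.univ.filter (fun j : Fin S => (i:ℕ) < (j:ℕ)), g j * u n j) / lam)
      · intro n
        rw [hurec n i]
        ring
      · have hTlim : Tendsto
            (fun n => ∑ j ∈ Finset.univ.filter (fun j : Fin S => (i:ℕ) < (j:ℕ)), g j * u n j)
            atTop (nhds (∑ j ∈ Finset.univ.filter (fun j : Fin S => (i:ℕ) < (j:ℕ)),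
              g j * (c * V (j:ℕ)))) := by
          apply tendsto_finset_sum
          intro j hj
          have hjk : m - (j:ℕ) ≤ k := by
            simp only [Finset.mem_filter] at hj
            omega
          exact (ih j hjk).const_mul _
        have hsum : ∑ j ∈ Finset.univ.filter (fun j : Fin S => (i:ℕ) < (j:ℕ)), g j * (c * V (j:ℕ))
            = c * (lam * V (i:ℕ) - g i * V (i:ℕ)) := by
          rw [← hfin i, Finset.mul_sum]
          apply Finset.sum_congr rfl
          intro j _
          ring
        rw [hsum] at hTlim
        have := hTlim.div_const lam
        convert this using 2
        field_simp
  -- sum of entries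
  have hVsum : ∑ i : Fin S, V (i:ℕ) = 1 := by
    rw [Fin.sum_univ_eq_sum_range (fun t => V t) S, hmS]
    have hb := add_pow p (1 - p) m
    have hone : p + (1 - p) = 1 := by ring
    rw [hone, one_pow] at hb
    rw [hVdef]
    simp only
    have hc2 : ∑ t ∈ Finset.range (m+1), (m.choose t : ℝ) * p ^ t * (1 - p) ^ (m - t)
        = ∑ t ∈ Finset.range (m+1), p ^ t * (1 - p) ^ (m - t) * (m.choose t : ℝ) := by
      apply Finset.sum_congr rfl
      intro t _
      ring
    rw [hc2, ← hb]
  set σ : ℕ → ℝ := fun n => ∑ i, u n i with hσdef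
  have hσ : Tendsto σ atTop (nhds c) := by
    have h1 : Tendsto σ atTop (nhds (∑ i : Fin S, c * V (i:ℕ))) := by
      apply tendsto_finset_sum
      intro i _
      exact ht (m - (i:ℕ)) i le_rfl
    have h2 : ∑ i : Fin S, c * V (i:ℕ) = c := by
      rw [← Finset.mul_sum, hVsum, mul_one]
    rwa [h2] at h1
  have hsσ : ∀ n, s n = σ n * lam ^ n := by
    intro n
    rw [hs n, hσdef]
    simp only
    rw [Finset.sum_mul]
    apply Finset.sum_congr rfl
    intro i _
    exact hAu n i
  have hev : ∀ᶠ n in atTop, s n ≠ 0 := by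
    filter_upwards [hσ.eventually_ne hcne] with n hn
    rw [hsσ n]
    exact mul_ne_zero hn (hlpn n)
  refine ⟨hev, ?_⟩
  rw [tendsto_pi_nhds]
  intro i
  have hrw : ∀ n, ((s n)⁻¹ • (A ^ n).mulVec P) i = u n i * (σ n)⁻¹ := by
    intro n
    simp only [Pi.smul_apply, smul_eq_mul]
    calc (s n)⁻¹ * (A ^ n).mulVec P i = (σ n * lam ^ n)⁻¹ * (u n i * lam ^ n) := by
          rw [hsσ, hAu]
        _ = u n i * (σ n)⁻¹ * (lam ^ n * (lam ^ n)⁻¹) := by ring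
        _ = u n i * (σ n)⁻¹ := by rw [mul_inv_cancel₀ (hlpn n), mul_one]
  simp only [hrw]
  have h1 : Tendsto (fun n => u n i * (σ n)⁻¹) atTop (nhds ((c * V (i:ℕ)) * c⁻¹)) :=
    (ht (m - (i:ℕ)) i le_rfl).mul (hσ.inv₀ hcne)
  have h2 : (c * V (i:ℕ)) * c⁻¹ = V (i:ℕ) := by
    field_simp
  rw [h2] at h1
  exact h1
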